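/- Let β, γ, Λ : [0,∞) → ℝ be differentiable and satisfy β'(t) = −α₂β(t)² − 2α₁β(t) + q(1−q)μ²/ς², γ'(t) = −(α₁ + α₂β(t))γ(t) + α₃β(t), and Λ'(t) = (1/2)α₂γ(t)² − α₃γ(t) − (1/2)σ²β(t), where σ² := σ₁² + σ₂². Then the function v(x,t) := exp(Λ(t) − (1/2)β(t)x² − γ(t)x) satisfies, for all x ∈ ℝ and t ≥ 0, the Hamilton–Jacobi–Bellman equation ∂ₜv = (1/2)σ²·∂ₓₓv + (α₃ − α₁x)·∂ₓv − (1/2)q(1−q)(μ²x²/ς²)·v + (qσ₂²/(2(1−q)))·(∂ₓv)²/v. -/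

import Mathlib

/-- Kim–Omberg model: if `β, γ, Λ` solve the Riccati-type ODE system, then
`v(x,t) = exp(Λ(t) - (1/2)β(t)x² - γ(t)x)` solves the reduced dual HJB equation
`∂ₜv = (1/2)σ²∂ₓₓv + (α₃-α₁x)∂ₓv - (1/2)q(1-q)(μ²x²/ς²)v + (qσ₂²/(2(1-q)))(∂ₓv)²/v`. -/
theorem stmt8 (k m μ ς σ ρ q : ℝ)
    (hk : 0 < k) (hμ : μ ≠ 0) (hς : 0 < ς) (hσ : 0 < σ)
    (hρ : ρ ∈ Set.Ioo (-1 : ℝ) 1) (hq : q ∈ Set.Ioo (0 : ℝ) 1)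
    (σ₁ σ₂ α₁ α₂ α₃ α₄ : ℝ)
    (hσ₁ : σ₁ = ρ * σ) (hσ₂ : σ₂ = Real.sqrt (1 - ρ ^ 2) * σ)
    (hα₁ : α₁ = k + q * μ * σ₁ / ς) (hα₂ : α₂ = σ₁ ^ 2 + σ₂ ^ 2 / (1 - q))
    (hα₃ : α₃ = k * m)
    (hα₄ : α₄ = Real.sqrt (α₁ ^ 2 + q * (1 - q) * α₂ * μ ^ 2 / ς ^ 2))
    (β γ Lam : ℝ → ℝ)
    (hβ : ∀ t, 0 ≤ t → HasDerivAt β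
      (-α₂ * (β t) ^ 2 - 2 * α₁ * β t + q * (1 - q) * μ ^ 2 / ς ^ 2) t)
    (hγ : ∀ t, 0 ≤ t → HasDerivAt γ (-(α₁ + α₂ * β t) * γ t + α₃ * β t) t)
    (hLam : ∀ t, 0 ≤ t → HasDerivAt Lam
      ((1 / 2) * α₂ * (γ t) ^ 2 - α₃ * γ t - (1 / 2) * (σ₁ ^ 2 + σ₂ ^ 2) * β t) t)
    (v : ℝ → ℝ → ℝ)
    (hv : ∀ x t, v x t = Real.exp (Lam t - (1 / 2) * β t * x ^ 2 - γ t * x)) :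
    ∀ x t, 0 ≤ t →
      deriv (fun τ => v x τ) t =
        (1 / 2) * (σ₁ ^ 2 + σ₂ ^ 2) * deriv (deriv (fun y => v y t)) x
        + (α₃ - α₁ * x) * deriv (fun y => v y t) x
        - (1 / 2) * q * (1 - q) * (μ ^ 2 * x ^ 2 / ς ^ 2) * v x t
        + (q * σ₂ ^ 2 / (2 * (1 - q))) * (deriv (fun y => v y t) x) ^ 2 / v x t := by
  intro x t ht
  have hq1 : (1 : ℝ) - q ≠ 0 := by have := hq.2; intro h; linarith [hq.2]
  have hς0 : ς ≠ 0 := ne_of_gt hς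
  -- inner function in y
  have hinner : ∀ y : ℝ, HasDerivAt (fun y => Lam t - (1 / 2) * β t * y ^ 2 - γ t * y)
      (-(β t * y) - γ t) y := by
    intro y
    have h := ((hasDerivAt_const y (Lam t)).sub
        ((hasDerivAt_pow 2 y).const_mul ((1 / 2) * β t))).sub
        ((hasDerivAt_id y).const_mul (γ t))
    exact h.congr_deriv (by push_cast; ring)
  have hfun : (fun y => v y t) = fun y => Real.exp (Lam t - (1 / 2) * β t * y ^ 2 - γ t * y) :=
    funext fun y => hv y t
  have hd1 : deriv (fun y => v y t) = fun y => (-(β t * y) - γ t) * v y t := by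
    funext y
    rw [hfun, ((hinner y).exp).deriv, hv]
    ring
  -- second derivative
  have hlin : ∀ y : ℝ, HasDerivAt (fun y : ℝ => -(β t * y) - γ t) (-β t) x := by
    intro y
    have h := (((hasDerivAt_id x).const_mul (β t)).neg).sub_const (γ t)
    exact h.congr_deriv (by ring)
  have hprod := (hlin x).mul ((hinner x).exp)
  have hd2 : deriv (deriv (fun y => v y t)) x
      = (-β t) * v x t + (-(β t * x) - γ t) ^ 2 * v x t := by
    rw [hd1]
    have heq : (fun y => (-(β t * y) - γ t) * v y t)
        = fun y => (-(β t * y) - γ t) * Real.exp (Lam t - (1 / 2) * β t * y ^ 2 - γ t * y) :=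
      funext fun y => by rw [hv]
    have hpd := hprod.deriv
    simp only [Pi.mul_def] at hpd
    rw [heq, hpd, hv]
    ring
  -- time derivative
  have hT : HasDerivAt (fun τ => Lam τ - (1 / 2) * β τ * x ^ 2 - γ τ * x)
      (((1 / 2) * α₂ * (γ t) ^ 2 - α₃ * γ t - (1 / 2) * (σ₁ ^ 2 + σ₂ ^ 2) * β t)
        - ((1 / 2) * (-α₂ * (β t) ^ 2 - 2 * α₁ * β t + q * (1 - q) * μ ^ 2 / ς ^ 2)) * x ^ 2
        - (-(α₁ + α₂ * β t) * γ t + α₃ * β t) * x) t := by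
    exact ((hLam t ht).sub (((hβ t ht).const_mul (1 / 2)).mul_const (x ^ 2))).sub
      ((hγ t ht).mul_const x)
  have hfunt : (fun τ => v x τ) = fun τ => Real.exp (Lam τ - (1 / 2) * β τ * x ^ 2 - γ τ * x) :=
    funext fun τ => hv x τ
  have hdt := hfunt ▸ (hT.exp).deriv
  rw [hdt, hd2, hd1]
  simp only [hv]
  have hE := Real.exp_ne_zero (Lam t - (1 / 2) * β t * x ^ 2 - γ t * x)
  subst hα₂
  field_simp
  ring
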